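/- Let δ > 0 and suppose that for each k ≥ 1, |Φ^{(k)}_t(x,y)| ≤ (C₁ Γ(δ))^k C₂^{k-1} Γ(kδ)^{-1} t^{kδ-1} H_t(x,y) with C₁, C₂ > 0 and H_t(x,y) ≥ 0. Then the series Ψ_t(x,y) = Σ_{k≥1} Φ^{(k)}_t(x,y) converges absolutely for every t ∈ (0,T], x, y ∈ ℝ^d, and there is a constant C_Ψ (depending on C₁, C₂, δ, T) such that |Ψ_t(x,y)| ≤ C_Ψ t^{δ-1} H_t(x,y). -/

import Mathlib

open Real

open Filter in
private lemma gamma_key8 {y a : ℝ} (ha : 0 < a) (ha1 : a ≤ 1) (hy : 2 ≤ y) :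
    Gamma y ≤ Gamma (y + a) * (y + a - 1) ^ (-a) := by
  set p := y + a - 1 with hp
  have hp0 : 0 < p := by dsimp [p]; linarith
  have hya : 0 < y + a := by linarith
  have hy0 : (0:ℝ) < y := by linarith
  have hcomb : a • p + (1 - a) • (y + a) = y := by dsimp [p]; ring
  have hconv := convexOn_log_Gamma.2 (Set.mem_Ioi.2 hp0) (Set.mem_Ioi.2 hya)
        ha.le (by linarith : (0:ℝ) ≤ 1 - a) (by ring)
  rw [hcomb] at hconv
  simp only [Function.comp_apply, smul_eq_mul] at hconv
  have hΓp := Real.Gamma_pos_of_pos hp0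
  have hΓya := Real.Gamma_pos_of_pos hya
  have hΓy := Real.Gamma_pos_of_pos hy0
  have h1 : Gamma y ≤ Gamma p ^ a * Gamma (y + a) ^ (1 - a) := by
    rw [Real.rpow_def_of_pos hΓp, Real.rpow_def_of_pos hΓya, ← Real.exp_add]
    calc Gamma y = Real.exp (Real.log (Gamma y)) := (Real.exp_log hΓy).symm
      _ ≤ _ := by rw [mul_comm a, mul_comm (1-a)] at hconv; exact Real.exp_le_exp.2 hconv
  have hΓrec : Gamma p = Gamma (y + a) / p := by
    have h2 : Gamma (p + 1) = p * Gamma p := Real.Gamma_add_one hp0.ne'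
    have hp1 : p + 1 = y + a := by dsimp [p]; ring
    rw [hp1] at h2
    field_simp [h2]
    rw [h2]; ring
  calc Gamma y ≤ Gamma p ^ a * Gamma (y + a) ^ (1 - a) := h1
    _ = Gamma (y + a) * p ^ (-a) := by
        rw [hΓrec, Real.div_rpow hΓya.le hp0.le, Real.rpow_neg hp0.le,
          div_eq_mul_inv, mul_right_comm, ← Real.rpow_add hΓya]
        norm_num [mul_comm]

open Filter in
private lemma ratio_tendsto8 {δ : ℝ} (hδ : 0 < δ) :
    Tendsto (fun k : ℕ => Gamma (((k:ℝ)+1)*δ) / Gamma (((k:ℝ)+2)*δ)) atTop (nhds 0) := by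
  set a := min δ 1 with hadef
  have ha : 0 < a := lt_min hδ one_pos
  have ha1 : a ≤ 1 := min_le_right _ _
  have haδ : a ≤ δ := min_le_left _ _
  have hinner : Tendsto (fun k : ℕ => ((k:ℝ)+1)*δ + a - 1) atTop atTop := by
    have h1 : Tendsto (fun k : ℕ => ((k:ℝ)+1)*δ) atTop atTop :=
      (tendsto_natCast_atTop_atTop.atTop_add tendsto_const_nhds).atTop_mul_const hδ
    simpa [add_sub_assoc] using tendsto_atTop_add_const_right atTop (a-1) h1
  have hupper : Tendsto (fun k : ℕ => (((k:ℝ)+1)*δ + a - 1) ^ (-a)) atTop (nhds 0) :=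
    (tendsto_rpow_neg_atTop ha).comp hinner
  apply squeeze_zero' ?_ ?_ hupper
  · filter_upwards with k
    positivity
  · filter_upwards [eventually_ge_atTop ⌈2/δ⌉₊] with k hk
    have hk' : (2:ℝ)/δ ≤ (k:ℝ) := le_trans (Nat.le_ceil _) (Nat.cast_le.2 hk)
    have hy2 : 2 ≤ ((k:ℝ)+1)*δ := by
      rw [div_le_iff₀ hδ] at hk'
      nlinarith
    set y := ((k:ℝ)+1)*δ with hy
    have key := gamma_key8 ha ha1 hy2
    have hmono : Gamma (y + a) ≤ Gamma (y + δ) := by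
      refine Real.Gamma_strictMonoOn_Ici.monotoneOn ?_ ?_ (by linarith)
      · exact Set.mem_Ici.2 (by linarith)
      · exact Set.mem_Ici.2 (by linarith)
    have hpow : (0:ℝ) ≤ (y + a - 1) ^ (-a) := Real.rpow_nonneg (by linarith) _
    have hΓyδ : 0 < Gamma (y + δ) := Real.Gamma_pos_of_pos (by linarith)
    have h2 : Gamma y ≤ Gamma (y + δ) * (y + a - 1) ^ (-a) :=
      key.trans (by gcongr)
    have heq : ((k:ℝ)+2)*δ = y + δ := by rw [hy]; ring
    rw [heq, div_le_iff₀ hΓyδ]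
    linarith [h2]

open Filter in
private lemma summable_u8 {δ c0 c : ℝ} (hδ : 0 < δ) (hc0 : 0 < c0) (hc : 0 < c) :
    Summable (fun k : ℕ => c0 * c ^ k / Gamma (((k:ℝ)+1)*δ)) := by
  set u := fun k : ℕ => c0 * c ^ k / Gamma (((k:ℝ)+1)*δ) with hu
  have hΓ : ∀ k : ℕ, 0 < Gamma (((k:ℝ)+1)*δ) := fun k =>
    Real.Gamma_pos_of_pos (by positivity)
  have hupos : ∀ k, 0 < u k := fun k => by
    simp only [hu]; positivity
  refine summable_of_ratio_test_tendsto_lt_one (l := 0) one_pos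
    (Eventually.of_forall fun k => (hupos k).ne') ?_
  have heq : (fun k : ℕ => ‖u (k+1)‖ / ‖u k‖) =
      fun k : ℕ => c * (Gamma (((k:ℝ)+1)*δ) / Gamma (((k:ℝ)+2)*δ)) := by
    funext k
    rw [Real.norm_eq_abs, Real.norm_eq_abs, abs_of_pos (hupos _), abs_of_pos (hupos _)]
    simp only [hu]
    have h1 := (hΓ k).ne'
    have h2 := (hΓ (k+1)).ne'
    push_cast at h2 ⊢
    have h3 : (↑k + 1 + 1 : ℝ) = ↑k + 2 := by ring
    rw [h3, pow_succ]
    rw [h3] at h2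
    field_simp
  rw [heq]
  simpa using (ratio_tendsto8 hδ).const_mul c

set_option maxHeartbeats 1000000 in
theorem stmt8 (d : ℕ) (δ T C₁ C₂ : ℝ) (hδ : 0 < δ) (hT : 0 < T)
    (hC₁ : 0 < C₁) (hC₂ : 0 < C₂)
    (Φ : ℕ → ℝ → EuclideanSpace ℝ (Fin d) → EuclideanSpace ℝ (Fin d) → ℝ)
    (H : ℝ → EuclideanSpace ℝ (Fin d) → EuclideanSpace ℝ (Fin d) → ℝ)
    (hHpos : ∀ t x y, 0 ≤ H t x y)
    (hΦ : ∀ k : ℕ, 1 ≤ k → ∀ t : ℝ, 0 < t → t ≤ T → ∀ x y,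
      |Φ k t x y| ≤ (C₁ * Gamma δ) ^ k * C₂ ^ (k - 1) / Gamma (k * δ) *
        t ^ (k * δ - 1) * H t x y) :
    ∃ CΨ > 0, ∀ t : ℝ, 0 < t → t ≤ T → ∀ x y,
      Summable (fun k : ℕ => |Φ (k + 1) t x y|) ∧
      |∑' k : ℕ, Φ (k + 1) t x y| ≤ CΨ * t ^ (δ - 1) * H t x y := by
  have hΓδ : 0 < Gamma δ := Real.Gamma_pos_of_pos hδ
  set c0 : ℝ := C₁ * Gamma δ with hc0def
  set c : ℝ := C₁ * Gamma δ * C₂ * T ^ δ with hcdef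
  have hc0 : 0 < c0 := by positivity
  have hc : 0 < c := by positivity
  set u : ℕ → ℝ := fun k => c0 * c ^ k / Gamma (((k:ℝ)+1)*δ) with hudef
  have hΓ : ∀ k : ℕ, 0 < Gamma (((k:ℝ)+1)*δ) := fun k =>
    Real.Gamma_pos_of_pos (by positivity)
  have hupos : ∀ k, 0 < u k := fun k => by
    simp only [hudef]; positivity
  have hsum : Summable u := summable_u8 hδ hc0 hc
  refine ⟨∑' k, u k, Summable.tsum_pos hsum (fun k => (hupos k).le) 0 (hupos 0), ?_⟩
  intro t ht htT x y
  have hH := hHpos t x y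
  -- key pointwise bound
  have hbound : ∀ k : ℕ, |Φ (k + 1) t x y| ≤ u k * (t ^ (δ - 1) * H t x y) := by
    intro k
    have h := hΦ (k+1) (Nat.le_add_left 1 k) t ht htT x y
    simp only [Nat.add_sub_cancel] at h
    push_cast at h
    refine h.trans ?_
    have hΓk := hΓ k
    have hexp : ((k:ℝ)+1)*δ - 1 = (k:ℝ)*δ + (δ - 1) := by ring
    have huk : u k = (C₁ * Gamma δ)^(k+1) * C₂^k * T^((k:ℝ)*δ) / Gamma (((k:ℝ)+1)*δ) := by
      simp only [hudef, hcdef, hc0def]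
      rw [mul_pow, mul_pow, ← Real.rpow_natCast (T ^ δ) k, ← Real.rpow_mul hT.le]
      rw [mul_comm δ (k:ℝ)]
      ring_nf
    have htT' : t ^ ((k:ℝ)*δ) ≤ T ^ ((k:ℝ)*δ) :=
      Real.rpow_le_rpow ht.le htT (by positivity)
    rw [hexp, Real.rpow_add ht, huk]
    set A := (C₁ * Gamma δ)^(k+1) * C₂^k with hA
    have hA0 : 0 ≤ A / Gamma (((k:ℝ)+1)*δ) * t ^ (δ-1) * H t x y := by
      have : (0:ℝ) ≤ A / Gamma (((k:ℝ)+1)*δ) * t ^ (δ-1) := by positivity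
      exact mul_nonneg this hH
    calc A / Gamma (((k:ℝ)+1)*δ) * (t ^ ((k:ℝ)*δ) * t ^ (δ-1)) * H t x y
        = t ^ ((k:ℝ)*δ) * (A / Gamma (((k:ℝ)+1)*δ) * t ^ (δ-1) * H t x y) := by ring
      _ ≤ T ^ ((k:ℝ)*δ) * (A / Gamma (((k:ℝ)+1)*δ) * t ^ (δ-1) * H t x y) :=
          mul_le_mul_of_nonneg_right htT' hA0
      _ = A * C₂ ^ 0 * T ^ ((k:ℝ)*δ) / Gamma (((k:ℝ)+1)*δ) * (t ^ (δ-1) * H t x y) := by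
          ring
      _ = A * T ^ ((k:ℝ)*δ) / Gamma (((k:ℝ)+1)*δ) * (t ^ (δ-1) * H t x y) := by
          norm_num
  have hsum2 : Summable (fun k : ℕ => u k * (t ^ (δ - 1) * H t x y)) :=
    hsum.mul_right _
  have hsummable : Summable (fun k : ℕ => |Φ (k + 1) t x y|) :=
    Summable.of_nonneg_of_le (fun k => abs_nonneg _) hbound hsum2
  refine ⟨hsummable, ?_⟩
  calc |∑' k : ℕ, Φ (k + 1) t x y| ≤ ∑' k : ℕ, |Φ (k + 1) t x y| := by
        have h := norm_tsum_le_tsum_norm (f := fun k : ℕ => Φ (k + 1) t x y)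
          (by simpa [Real.norm_eq_abs] using hsummable)
        simpa [Real.norm_eq_abs] using h
    _ ≤ ∑' k : ℕ, u k * (t ^ (δ - 1) * H t x y) := Summable.tsum_le_tsum hbound hsummable hsum2
    _ = (∑' k, u k) * (t ^ (δ - 1) * H t x y) := tsum_mul_right
    _ = (∑' k, u k) * t ^ (δ - 1) * H t x y := by ring
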